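/- For any profile in which the median of all agents x_med and the optimum y* of the maximum average group cost satisfy y* > x_med, there exists a group G_j with at least |G_j|/2 members located at or to the left of x_med, and consequently magc(y*, r) >= (y* - x_med)/2. -/

import Mathlib

open Finset

variable {n m : ℕ}

/-- Members of group `j`. -/
def grp (g : Fin n → Fin m) (j : Fin m) : Finset (Fin n) :=
  Finset.univ.filter (fun i => g i = j)

/-- Maximum total group cost. -/
noncomputable def mtgc (x : Fin n → ℝ) (g : Fin n → Fin m) (y : ℝ) : ℝ :=
  ⨆ j : Fin m, ∑ i ∈ grp g j, |y - x i|

/-- Maximum average group cost. -/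
noncomputable def magc (x : Fin n → ℝ) (g : Fin n → Fin m) (y : ℝ) : ℝ :=
  ⨆ j : Fin m, (∑ i ∈ grp g j, |y - x i|) / (grp g j).card

/-- Left median of a multiset of reals (`⌈k/2⌉`-th smallest). -/
noncomputable def medianOf (s : Multiset ℝ) : ℝ :=
  (s.sort (· ≤ ·)).getD ((Multiset.card s - 1) / 2) 0

/-- Left median of the locations of the members of group `j`. -/
noncomputable def groupMedian (x : Fin n → ℝ) (g : Fin n → Fin m) (j : Fin m) : ℝ :=
  medianOf ((grp g j).val.map x)

/-- A largest group, ties broken by the smallest index. -/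
noncomputable def majGroup (g : Fin n → Fin m) [NeZero m] : Fin m :=
  (Finset.univ.filter
    (fun j => ∀ k : Fin m, (grp g k).card ≤ (grp g j).card)).min' (by
      obtain ⟨b, -, hb⟩ :=
        Finset.exists_max_image Finset.univ (fun j => (grp g j).card) Finset.univ_nonempty
      exact ⟨b, Finset.mem_filter.mpr ⟨Finset.mem_univ _, fun k => hb k (Finset.mem_univ k)⟩⟩)

/-- Majority Group Deterministic Mechanism. -/
noncomputable def MGDM (x : Fin n → ℝ) (g : Fin n → Fin m) [NeZero m] : ℝ :=
  groupMedian x g (majGroup g)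

noncomputable def avgc (x : Fin n → ℝ) (g : Fin n → Fin m) (j : Fin m) (y : ℝ) : ℝ :=
  (∑ i ∈ grp g j, |y - x i|) / (grp g j).card

noncomputable def maxc (x : Fin n → ℝ) (g : Fin n → Fin m) (j : Fin m) (y : ℝ) : ℝ :=
  sSup ((fun i => |y - x i|) '' {i | g i = j})

noncomputable def minc (x : Fin n → ℝ) (g : Fin n → Fin m) (j : Fin m) (y : ℝ) : ℝ :=
  sInf ((fun i => |y - x i|) '' {i | g i = j})

noncomputable def IIF1 (x : Fin n → ℝ) (g : Fin n → Fin m) (y : ℝ) : ℝ :=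
  (⨆ j : Fin m, avgc x g j y) + ⨆ j : Fin m, (maxc x g j y - minc x g j y)
/-- Median of all agent locations (the `⌈n/2⌉`-th smallest). -/
noncomputable def allMedian (x : Fin n → ℝ) : ℝ :=
  medianOf (Finset.univ.val.map x)

/-- If the optimum `y*` of the maximum average group cost lies strictly to the
right of the median of all agents, then some group has at least half of its
members at or to the left of the median, and consequently
`magc y* ≥ (y* - x_med)/2`. -/
lemma med_count (x : Fin n → ℝ) (hn : 0 < n) :
    n ≤ 2 * (univ.filter (fun i => x i ≤ allMedian x)).card := by
  set s : Multiset ℝ := (univ : Finset (Fin n)).val.map x with hs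
  set l := s.sort (· ≤ ·) with hl
  have hcard : Multiset.card s = n := by simp [hs]
  have hlen : l.length = n := by rw [hl, Multiset.length_sort, hcard]
  have hidx : (n - 1) / 2 < l.length := by omega
  have hmed : allMedian x = l.get ⟨(n - 1) / 2, hidx⟩ := by
    rw [allMedian, medianOf, ← hs, hcard, ← hl, List.getD_eq_getElem l 0 hidx]
    rfl
  have key : ∀ a ∈ l.take ((n - 1) / 2 + 1), a ≤ allMedian x := by
    intro a ha
    rw [List.mem_take_iff_getElem] at ha
    obtain ⟨i, hi, rfl⟩ := ha
    rw [lt_min_iff] at hi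
    rw [hmed]
    exact (Multiset.pairwise_sort s _).rel_get_of_le
      (a := ⟨i, hi.2⟩) (b := ⟨(n - 1) / 2, hidx⟩) (by simp; omega)
  have h1 : (n - 1) / 2 + 1 ≤ l.countP (fun a => decide (a ≤ allMedian x)) := by
    have htake : (l.take ((n - 1) / 2 + 1)).countP (fun a => decide (a ≤ allMedian x))
        = (l.take ((n - 1) / 2 + 1)).length :=
      List.countP_eq_length.mpr (fun a ha => by simpa using key a ha)
    have := (List.take_sublist ((n - 1) / 2 + 1) l).countP_le
      (p := fun a => decide (a ≤ allMedian x))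
    rw [htake] at this
    rwa [List.length_take, min_eq_left (by omega)] at this
  have h2 : (univ.filter (fun i => x i ≤ allMedian x)).card
      = l.countP (fun a => decide (a ≤ allMedian x)) := by
    have : (univ.filter (fun i => x i ≤ allMedian x)).card
        = Multiset.countP (fun a => a ≤ allMedian x) s := by
      rw [hs, Multiset.countP_map]
      rfl
    rw [this, ← Multiset.sort_eq s (· ≤ ·), ← hl, Multiset.coe_countP]
  omega

theorem stmt10 [NeZero m] (x : Fin n → ℝ) (g : Fin n → Fin m)
    (hg : Function.Surjective g) (ystar : ℝ)
    (hopt : ∀ z : ℝ, magc x g ystar ≤ magc x g z)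
    (hlt : allMedian x < ystar) :
    (∃ j : Fin m,
      (grp g j).card ≤ 2 * ((grp g j).filter (fun i => x i ≤ allMedian x)).card) ∧
    (ystar - allMedian x) / 2 ≤ magc x g ystar := by
  have hm : 0 < m := Nat.pos_of_ne_zero (NeZero.ne m)
  have hn : 0 < n := by
    obtain ⟨i, -⟩ := hg ⟨0, hm⟩
    exact i.pos
  have hcount := med_count x hn
  have hsum : ∑ j, (grp g j).card = n := by
    have := Finset.card_eq_sum_card_fiberwise (f := g) (s := (univ : Finset (Fin n)))
      (t := univ) (fun _ _ => mem_univ _)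
    simpa [grp] using this.symm
  have hsum2 : ∑ j, ((grp g j).filter (fun i => x i ≤ allMedian x)).card
      = (univ.filter (fun i => x i ≤ allMedian x)).card := by
    have := Finset.card_eq_sum_card_fiberwise (f := g)
      (s := univ.filter (fun i => x i ≤ allMedian x)) (t := univ) (fun _ _ => mem_univ _)
    rw [this]
    apply Finset.sum_congr rfl
    intro j _
    congr 1
    simp [grp, Finset.filter_filter, and_comm]
  have hex : ∃ j, (grp g j).card
      ≤ 2 * ((grp g j).filter (fun i => x i ≤ allMedian x)).card := by
    by_contra h
    push_neg at h
    have hle : ∑ j, (2 * ((grp g j).filter (fun i => x i ≤ allMedian x)).card + 1)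
        ≤ ∑ j, (grp g j).card :=
      Finset.sum_le_sum fun j _ => (h j)
    rw [Finset.sum_add_distrib, ← Finset.mul_sum, hsum2, hsum] at hle
    simp at hle
    omega
  refine ⟨hex, ?_⟩
  obtain ⟨j, hj⟩ := hex
  have hne : (grp g j).Nonempty := by
    obtain ⟨i, hi⟩ := hg j
    exact ⟨i, by simp [grp, hi]⟩
  have hcpos : 0 < (grp g j).card := card_pos.mpr hne
  set F := (grp g j).filter (fun i => x i ≤ allMedian x) with hF
  have hD : 0 ≤ ystar - allMedian x := le_of_lt (sub_pos.mpr hlt)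
  have hsumF : (F.card : ℝ) * (ystar - allMedian x) ≤ ∑ i ∈ grp g j, |ystar - x i| := by
    calc (F.card : ℝ) * (ystar - allMedian x) = ∑ _i ∈ F, (ystar - allMedian x) := by
          rw [Finset.sum_const, nsmul_eq_mul]
      _ ≤ ∑ i ∈ F, |ystar - x i| := by
          apply Finset.sum_le_sum
          intro i hi
          have hx : x i ≤ allMedian x := (mem_filter.mp hi).2
          have : ystar - allMedian x ≤ ystar - x i := by linarith
          exact this.trans (le_abs_self _)
      _ ≤ ∑ i ∈ grp g j, |ystar - x i| :=
          Finset.sum_le_sum_of_subset_of_nonneg (filter_subset _ _)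
            (fun i _ _ => abs_nonneg _)
  have havg : (ystar - allMedian x) / 2
      ≤ (∑ i ∈ grp g j, |ystar - x i|) / (grp g j).card := by
    rw [div_le_div_iff₀ two_pos (by exact_mod_cast hcpos)]
    have h2 : ((grp g j).card : ℝ) ≤ 2 * F.card := by exact_mod_cast hj
    nlinarith [hsumF, hD, h2]
  exact havg.trans (le_ciSup (f := fun j => (∑ i ∈ grp g j, |ystar - x i|) / (grp g j).card)
    (Finite.bddAbove_range _) j)
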